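/- If A_amal is the amalgamation of complete Boolean algebras A₀ and A₁ over a common complete subalgebra A_{0∧1} (conditions are pairs (a₀, a₁) with nonzero a₀ ∈ A₀, a₁ ∈ A₁ and h_{0,0∧1}(a₀) · h_{1,0∧1}(a₁) ≠ 0, ordered coordinatewise), then A₀ and A₁ both embed completely into the completion of this forcing via a₀ ↦ (a₀, 1) and a₁ ↦ (1, a₁), and the resulting square diagram is correct. -/
import Mathlib


/-- The projection associated with a complete embedding `e : C → A`:
`h(a) = ∏ {c : a ≤ e(c)}`. -/
noncomputable def projEmb {C A : Type*} [CompleteBooleanAlgebra C]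
    [CompleteBooleanAlgebra A] (e : C → A) (a : A) : C :=
  sInf {c | a ≤ e c}

/-- The amalgamation forcing of `A₀` and `A₁` over a common complete subalgebra `C`:
pairs `(a₀, a₁)` of nonzero elements whose projections to `C` are compatible, ordered
coordinatewise. -/
def amalSet {C A0 A1 : Type*} [CompleteBooleanAlgebra C] [CompleteBooleanAlgebra A0]
    [CompleteBooleanAlgebra A1] (e0 : C → A0) (e1 : C → A1) : Set (A0 × A1) :=
  {d | d.1 ≠ ⊥ ∧ d.2 ≠ ⊥ ∧ projEmb e0 d.1 ⊓ projEmb e1 d.2 ≠ ⊥}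

/-- `A₀` and `A₁` embed completely into the amalgamation over `A_{0∧1}` via
`a₀ ↦ (a₀, 1)` and `a₁ ↦ (1, a₁)` (maximal antichains are mapped to predense sets), and
the resulting square diagram is correct: if `h₀(a₀) ⊓ h₁(a₁) ≠ 0` then `a₀` and `a₁`
are compatible in the amalgamation. -/
lemma le_e_projEmb {C A : Type*} [CompleteBooleanAlgebra C] [CompleteBooleanAlgebra A]
    (e : C → A) (hinf : ∀ s : Set C, e (sInf s) = ⨅ c ∈ s, e c) (a : A) :
    a ≤ e (projEmb e a) := by
  rw [projEmb, hinf]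
  exact le_iInf₂ fun c hc => hc

lemma projEmb_le {C A : Type*} [CompleteBooleanAlgebra C] [CompleteBooleanAlgebra A]
    (e : C → A) {a : A} {c : C} (h : a ≤ e c) : projEmb e a ≤ c :=
  sInf_le h

lemma projEmb_ne_bot {C A : Type*} [CompleteBooleanAlgebra C] [CompleteBooleanAlgebra A]
    (e : C → A) (hsup : ∀ s : Set C, e (sSup s) = ⨆ c ∈ s, e c)
    (hinf : ∀ s : Set C, e (sInf s) = ⨅ c ∈ s, e c) {a : A} (ha : a ≠ ⊥) :
    projEmb e a ≠ ⊥ := by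
  intro h
  apply ha
  have hbot : e ⊥ = ⊥ := by
    have := hsup ∅
    simpa using this
  have := le_e_projEmb e hinf a
  rw [h, hbot] at this
  exact le_bot_iff.mp this

/-- If `c ⊓ projEmb e a ≠ ⊥` then `a ⊓ e c ≠ ⊥`. -/
lemma compat_of_proj {C A : Type*} [CompleteBooleanAlgebra C] [CompleteBooleanAlgebra A]
    (e : C → A) (hcompl : ∀ c : C, e cᶜ = (e c)ᶜ) {a : A} {c : C}
    (h : c ⊓ projEmb e a ≠ ⊥) : a ⊓ e c ≠ ⊥ := by
  intro hb
  apply h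
  have ha : a ≤ e cᶜ := by
    rw [hcompl]
    exact le_compl_iff_disjoint_right.mpr (disjoint_iff.mpr hb)
  have := projEmb_le e ha
  have : c ⊓ projEmb e a ≤ c ⊓ cᶜ := inf_le_inf_left c this
  simpa using le_bot_iff.mp (by simpa using this)

theorem stmt19 {C A0 A1 : Type*} [CompleteBooleanAlgebra C] [CompleteBooleanAlgebra A0]
    [CompleteBooleanAlgebra A1] (e0 : C → A0) (e1 : C → A1)
    (hinj0 : Function.Injective e0) (hinj1 : Function.Injective e1)
    (hinf0 : ∀ s : Set C, e0 (sInf s) = ⨅ c ∈ s, e0 c)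
    (hinf1 : ∀ s : Set C, e1 (sInf s) = ⨅ c ∈ s, e1 c)
    (hsup0 : ∀ s : Set C, e0 (sSup s) = ⨆ c ∈ s, e0 c)
    (hsup1 : ∀ s : Set C, e1 (sSup s) = ⨆ c ∈ s, e1 c)
    (hcompl0 : ∀ c : C, e0 cᶜ = (e0 c)ᶜ)
    (hcompl1 : ∀ c : C, e1 cᶜ = (e1 c)ᶜ) :
    (∀ M : Set A0, (∀ m ∈ M, m ≠ ⊥) → M.Pairwise (fun x y => x ⊓ y = ⊥) →
      (∀ a : A0, a ≠ ⊥ → ∃ m ∈ M, m ⊓ a ≠ ⊥) →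
      ∀ d ∈ amalSet e0 e1, ∃ m ∈ M, ∃ d' ∈ amalSet e0 e1, d' ≤ d ∧ d'.1 ≤ m) ∧
    (∀ M : Set A1, (∀ m ∈ M, m ≠ ⊥) → M.Pairwise (fun x y => x ⊓ y = ⊥) →
      (∀ a : A1, a ≠ ⊥ → ∃ m ∈ M, m ⊓ a ≠ ⊥) →
      ∀ d ∈ amalSet e0 e1, ∃ m ∈ M, ∃ d' ∈ amalSet e0 e1, d' ≤ d ∧ d'.2 ≤ m) ∧
    (∀ (a0 : A0) (a1 : A1), a0 ≠ ⊥ → a1 ≠ ⊥ →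
      projEmb e0 a0 ⊓ projEmb e1 a1 ≠ ⊥ →
      ∃ d ∈ amalSet e0 e1, d.1 ≤ a0 ∧ d.2 ≤ a1) := by
  refine ⟨?_, ?_, ?_⟩
  · intro M _ _ hpre d hd
    obtain ⟨hd0, hd1, hdc⟩ := hd
    set c := projEmb e0 d.1 ⊓ projEmb e1 d.2 with hc
    -- d.1 ⊓ e0 c ≠ ⊥
    have h1 : d.1 ⊓ e0 c ≠ ⊥ := by
      apply compat_of_proj e0 hcompl0
      rwa [inf_of_le_left (inf_le_left : c ≤ projEmb e0 d.1)]
    obtain ⟨m, hm, hmd⟩ := hpre _ h1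
    set a0' := m ⊓ (d.1 ⊓ e0 c) with ha0'
    have ha0ne : a0' ≠ ⊥ := by rwa [ha0', ← inf_assoc, inf_assoc] at hmd ⊢
    have hle : projEmb e0 a0' ≤ c :=
      projEmb_le e0 (le_trans inf_le_right inf_le_right)
    refine ⟨m, hm, (a0', d.2), ⟨ha0ne, hd1, ?_⟩, ⟨le_trans inf_le_right inf_le_left, le_rfl⟩,
      inf_le_left⟩
    have : projEmb e0 a0' ≤ projEmb e1 d.2 := le_trans hle inf_le_right
    rw [inf_of_le_left this]
    exact projEmb_ne_bot e0 hsup0 hinf0 ha0ne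
  · intro M _ _ hpre d hd
    obtain ⟨hd0, hd1, hdc⟩ := hd
    set c := projEmb e0 d.1 ⊓ projEmb e1 d.2 with hc
    have h1 : d.2 ⊓ e1 c ≠ ⊥ := by
      apply compat_of_proj e1 hcompl1
      rwa [inf_of_le_left (inf_le_right : c ≤ projEmb e1 d.2)]
    obtain ⟨m, hm, hmd⟩ := hpre _ h1
    set a1' := m ⊓ (d.2 ⊓ e1 c) with ha1'
    have ha1ne : a1' ≠ ⊥ := by rwa [ha1', ← inf_assoc, inf_assoc] at hmd ⊢
    have hle : projEmb e1 a1' ≤ c :=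
      projEmb_le e1 (le_trans inf_le_right inf_le_right)
    refine ⟨m, hm, (d.1, a1'), ⟨hd0, ha1ne, ?_⟩, ⟨le_rfl, le_trans inf_le_right inf_le_left⟩,
      inf_le_left⟩
    have : projEmb e1 a1' ≤ projEmb e0 d.1 := le_trans hle inf_le_left
    rw [inf_of_le_right this]
    exact projEmb_ne_bot e1 hsup1 hinf1 ha1ne
  · intro a0 a1 h0 h1 hc
    exact ⟨(a0, a1), ⟨h0, h1, hc⟩, le_rfl, le_rfl⟩
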